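/- Let k ≥ 1. For every box (i,j) of the double staircase partition ρ̃_{2k} with i even and j odd, one has wt((i,j),(1,2k)) = 0. -/

import Mathlib

/-- `(i,j)` is a box of the Young diagram of `lam` (parts `lam 1, lam 2, …`, rows indexed
from the top, columns from the left): `1 ≤ i`, `1 ≤ j ≤ lam i`. -/
def inDiagram (lam : ℕ → ℕ) (p : ℕ × ℕ) : Prop :=
  1 ≤ p.1 ∧ 1 ≤ p.2 ∧ p.2 ≤ lam p.1

/-- A step of a lattice path: up `(i,j) → (i-1,j)` or right `(i,j) → (i,j+1)`. -/
def isStep (p q : ℕ × ℕ) : Prop :=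
  (p.1 = q.1 + 1 ∧ p.2 = q.2) ∨ (q.1 = p.1 ∧ q.2 = p.2 + 1)

/-- `P` is a lattice path in `lam` from box `a` to box `b`: a nonempty sequence of boxes of
`lam` starting at `a`, ending at `b`, each step going up or right. -/
def IsLatticePath (lam : ℕ → ℕ) (a b : ℕ × ℕ) (P : List (ℕ × ℕ)) : Prop :=
  P ≠ [] ∧ P.head? = some a ∧ P.getLast? = some b ∧
    (∀ q ∈ P, inDiagram lam q) ∧ List.Chain' isStep P

/-- The signed weight of a path: the product of `(-1)^{i-1}` over all right steps taken from a
box in row `i` (up steps contribute `1`). -/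
def pathWeight : List (ℕ × ℕ) → ℤ
  | [] => 1
  | [_] => 1
  | p :: q :: rest =>
      (if q.1 = p.1 then (-1 : ℤ) ^ (p.1 - 1) else 1) * pathWeight (q :: rest)

/-- `wt(a,b)`: the sum of the signed weights of all lattice paths in `lam` from `a` to `b`. -/
noncomputable def wtSum (lam : ℕ → ℕ) (a b : ℕ × ℕ) : ℤ :=
  ∑ᶠ P ∈ {P : List (ℕ × ℕ) | IsLatticePath lam a b P}, pathWeight P

-- infrastructure
private def mz (p : ℕ × ℕ) : ℤ := (p.2 : ℤ) - (p.1 : ℤ)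

private lemma mz_lt {p q : ℕ × ℕ} (h : isStep p q) : mz p < mz q := by
  rcases h with ⟨h1, h2⟩ | ⟨h1, h2⟩ <;> unfold mz <;> omega

private lemma chain_pairwise {P : List (ℕ × ℕ)} (h : List.Chain' isStep P) :
    List.Pairwise (fun p q : ℕ × ℕ => mz p < mz q) P := by
  haveI : IsTrans (ℕ × ℕ) (fun p q : ℕ × ℕ => mz p < mz q) :=
    ⟨fun _ _ _ => lt_trans⟩
  exact List.isChain_iff_pairwise.mp (h.imp fun _ _ => mz_lt)

private lemma chain_nodup {P : List (ℕ × ℕ)} (h : List.Chain' isStep P) : P.Nodup :=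
  (chain_pairwise h).imp (fun hlt heq => by subst heq; exact lt_irrefl _ hlt)

private lemma paths_finite (lam : ℕ → ℕ) (M : ℕ) (hM : ∀ i, lam i ≤ M)
    (h0 : ∀ i, M < i → lam i = 0) (a b : ℕ × ℕ) :
    {P : List (ℕ × ℕ) | IsLatticePath lam a b P}.Finite := by
  classical
  set B : Set (ℕ × ℕ) := Set.Icc 1 M ×ˢ Set.Icc 1 M with hB
  have hBfin : B.Finite := (Set.finite_Icc _ _).prod (Set.finite_Icc _ _)
  have hmem : ∀ P ∈ {P : List (ℕ × ℕ) | IsLatticePath lam a b P}, ∀ x ∈ P, x ∈ B := by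
    rintro P ⟨-, -, -, hdiag, -⟩ x hx
    obtain ⟨h1, h2, h3⟩ := hdiag x hx
    have hx1 : x.1 ≤ M := by
      by_contra hc
      have := h0 x.1 (by omega)
      omega
    exact ⟨⟨h1, hx1⟩, ⟨h2, le_trans h3 (hM x.1)⟩⟩
  set N : ℕ := hBfin.toFinset.card with hN
  have hlen : ∀ P ∈ {P : List (ℕ × ℕ) | IsLatticePath lam a b P}, P.length ≤ N := by
    intro P hP
    have hnd : P.Nodup := chain_nodup hP.2.2.2.2
    have hsub : P.toFinset ⊆ hBfin.toFinset := by
      intro x hx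
      rw [Set.Finite.mem_toFinset]
      exact hmem P hP x (List.mem_toFinset.mp hx)
    calc P.length = P.toFinset.card := (List.toFinset_card_of_nodup hnd).symm
      _ ≤ N := Finset.card_le_card hsub
  haveI : Finite ↥B := hBfin.to_subtype
  have key : {P : List (ℕ × ℕ) | IsLatticePath lam a b P} ⊆
      (List.map (Subtype.val : B → ℕ × ℕ)) '' {l : List ↥B | l.length ≤ N} := by
    intro P hP
    refine ⟨P.pmap (fun x hx => (⟨x, hx⟩ : ↥B)) (hmem P hP), ?_, ?_⟩
    · simpa using hlen P hP
    · rw [List.map_pmap]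
      simpa using List.pmap_eq_map _ _ _ (hmem P hP) ▸ rfl
  exact Set.Finite.subset ((List.finite_length_le ↥B N).image _) key

private lemma paths_self (lam : ℕ → ℕ) (b : ℕ × ℕ) (hb : inDiagram lam b) :
    {P : List (ℕ × ℕ) | IsLatticePath lam b b P} = {[b]} := by
  ext P
  constructor
  · rintro ⟨hne, hhead, hlast, hmem, hchain⟩
    match P, hne with
    | [x], _ =>
      simp only [List.head?] at hhead
      simp only [Option.some_inj] at hhead
      simp [hhead]
    | x :: y :: rest, _ =>
      exfalso
      have hx : x = b := by simpa using hhead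
      have hblast : b ∈ y :: rest := by
        rw [List.getLast?_cons_cons] at hlast
        obtain ⟨h', he⟩ := List.mem_getLast?_eq_getLast (Option.mem_def.mpr hlast)
        rw [he]; exact List.getLast_mem h'
      have hp := chain_pairwise hchain
      rw [List.pairwise_cons] at hp
      have := hp.1 b hblast
      rw [hx] at this
      exact lt_irrefl _ this
  · rintro rfl
    exact ⟨by simp, rfl, rfl, by rintro q hq; simp at hq; rwa [hq], List.isChain_singleton _⟩

private lemma paths_empty (lam : ℕ → ℕ) (a b : ℕ × ℕ) (ha : ¬ inDiagram lam a) :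
    {P : List (ℕ × ℕ) | IsLatticePath lam a b P} = ∅ := by
  ext P
  simp only [Set.mem_setOf_eq, Set.mem_empty_iff_false, iff_false]
  rintro ⟨hne, hhead, -, hmem, -⟩
  match P, hne with
  | x :: rest, _ =>
    have hx : x = a := by simpa using hhead
    exact ha (hx ▸ hmem x List.mem_cons_self)

private lemma wtSum_not_in (lam : ℕ → ℕ) (a b : ℕ × ℕ) (ha : ¬ inDiagram lam a) :
    wtSum lam a b = 0 := by
  rw [wtSum, paths_empty lam a b ha, finsum_mem_empty]

private lemma wtSum_self (lam : ℕ → ℕ) (b : ℕ × ℕ) (hb : inDiagram lam b) :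
    wtSum lam b b = 1 := by
  rw [wtSum, paths_self lam b hb, finsum_mem_singleton]
  rfl

private lemma paths_cons (lam : ℕ → ℕ) (a b c : ℕ × ℕ) (ha : inDiagram lam a)
    (hstep : isStep a c) (Q : List (ℕ × ℕ)) (hQ : IsLatticePath lam c b Q) :
    IsLatticePath lam a b (a :: Q) := by
  obtain ⟨hne, hhead, hlast, hmem, hchain⟩ := hQ
  match Q, hne with
  | q :: rest, _ =>
    have hq : q = c := by simpa using hhead
    subst hq
    refine ⟨by simp, rfl, ?_, ?_, ?_⟩
    · rw [List.getLast?_cons_cons]; exact hlast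
    · rintro z hz
      rcases List.mem_cons.mp hz with rfl | hz
      · exact ha
      · exact hmem z hz
    · rw [List.Chain', List.isChain_cons_cons]; exact ⟨hstep, hchain⟩

private lemma paths_decomp (lam : ℕ → ℕ) (a b : ℕ × ℕ) (ha : inDiagram lam a)
    (hab : a ≠ b) :
    {P : List (ℕ × ℕ) | IsLatticePath lam a b P} =
      (fun Q => a :: Q) ''
        ({P : List (ℕ × ℕ) | IsLatticePath lam (a.1 - 1, a.2) b P} ∪
         {P : List (ℕ × ℕ) | IsLatticePath lam (a.1, a.2 + 1) b P}) := by
  have ha1 : 1 ≤ a.1 := ha.1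
  ext P
  constructor
  · rintro ⟨hne, hhead, hlast, hmem, hchain⟩
    match P, hne with
    | [x], _ =>
      exfalso
      have hx : x = a := by simpa using hhead
      have hxb : x = b := by simpa using hlast
      exact hab (hx ▸ hxb ▸ rfl)
    | x :: q :: rest, _ =>
      have hx : x = a := by simpa using hhead
      subst hx
      rw [List.Chain', List.isChain_cons_cons] at hchain
      have hstep := hchain.1
      have hQ : IsLatticePath lam q b (q :: rest) :=
        ⟨by simp, rfl, by rw [List.getLast?_cons_cons] at hlast; exact hlast,
         fun z hz => hmem z (List.mem_cons_of_mem _ hz), hchain.2⟩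
      rcases hstep with ⟨h1, h2⟩ | ⟨h1, h2⟩
      · refine ⟨q :: rest, Or.inl ?_, rfl⟩
        have : q = (x.1 - 1, x.2) := by
          ext <;> simp <;> omega
        rwa [← this]
      · refine ⟨q :: rest, Or.inr ?_, rfl⟩
        have : q = (x.1, x.2 + 1) := by ext <;> simp <;> omega
        rwa [← this]
  · rintro ⟨Q, hQ, rfl⟩
    rcases hQ with hQ | hQ
    · exact paths_cons lam a b (a.1 - 1, a.2) ha (Or.inl ⟨by simp; omega, rfl⟩) Q hQ
    · exact paths_cons lam a b (a.1, a.2 + 1) ha (Or.inr ⟨rfl, rfl⟩) Q hQ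

private lemma wtSum_step (lam : ℕ → ℕ)
    (hfin : ∀ a b : ℕ × ℕ, {P : List (ℕ × ℕ) | IsLatticePath lam a b P}.Finite)
    (a b : ℕ × ℕ) (ha : inDiagram lam a) (hab : a ≠ b) :
    wtSum lam a b = wtSum lam (a.1 - 1, a.2) b
      + (-1 : ℤ) ^ (a.1 - 1) * wtSum lam (a.1, a.2 + 1) b := by
  classical
  set u : ℕ × ℕ := (a.1 - 1, a.2) with hu
  set r : ℕ × ℕ := (a.1, a.2 + 1) with hr
  have ha1 : 1 ≤ a.1 := ha.1
  set Su : Finset (List (ℕ × ℕ)) := (hfin u b).toFinset with hSu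
  set Sr : Finset (List (ℕ × ℕ)) := (hfin r b).toFinset with hSr
  -- finset version of the decomposition
  have hdec : (hfin a b).toFinset = (Su ∪ Sr).image (fun Q => a :: Q) := by
    apply Finset.coe_injective
    rw [Finset.coe_image, Finset.coe_union, Set.Finite.coe_toFinset,
      Set.Finite.coe_toFinset, Set.Finite.coe_toFinset]
    exact paths_decomp lam a b ha hab
  have hdisj : Disjoint Su Sr := by
    rw [Finset.disjoint_left]
    intro Q hQu hQr
    rw [hSu, Set.Finite.mem_toFinset] at hQu
    rw [hSr, Set.Finite.mem_toFinset] at hQr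
    have h1 : Q.head? = some u := hQu.2.1
    have h2 : Q.head? = some r := hQr.2.1
    rw [h1] at h2
    have : u = r := by simpa using h2
    rw [hu, hr] at this
    have := congrArg Prod.snd this
    simp at this
  have hcount : wtSum lam a b = ∑ Q ∈ Su ∪ Sr, pathWeight (a :: Q) := by
    rw [wtSum, ← Set.Finite.coe_toFinset (hfin a b), finsum_mem_coe_finset, hdec,
      Finset.sum_image (by intro x _ y _ h; simpa using h)]
  have hwu : ∀ Q ∈ Su, pathWeight (a :: Q) = pathWeight Q := by
    intro Q hQ
    rw [hSu, Set.Finite.mem_toFinset] at hQ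
    obtain ⟨hne, hhead, -, -, -⟩ := hQ
    match Q, hne with
    | q :: rest, _ =>
      have hq : q = u := by simpa using hhead
      subst hq
      show (if u.1 = a.1 then (-1 : ℤ) ^ (a.1 - 1) else 1) * pathWeight (u :: rest) = _
      rw [if_neg (by rw [hu]; simp; omega), one_mul]
  have hwr : ∀ Q ∈ Sr, pathWeight (a :: Q) = (-1 : ℤ) ^ (a.1 - 1) * pathWeight Q := by
    intro Q hQ
    rw [hSr, Set.Finite.mem_toFinset] at hQ
    obtain ⟨hne, hhead, -, -, -⟩ := hQ
    match Q, hne with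
    | q :: rest, _ =>
      have hq : q = r := by simpa using hhead
      subst hq
      show (if r.1 = a.1 then (-1 : ℤ) ^ (a.1 - 1) else 1) * pathWeight (r :: rest) = _
      rw [if_pos (by rw [hr])]
  rw [hcount, Finset.sum_union hdisj, Finset.sum_congr rfl hwu, Finset.sum_congr rfl hwr,
    ← Finset.mul_sum]
  congr 1
  · rw [wtSum, ← Set.Finite.coe_toFinset (hfin u b), finsum_mem_coe_finset]
  · rw [wtSum, ← Set.Finite.coe_toFinset (hfin r b), finsum_mem_coe_finset]


/-- The double staircase partition `ρ̃_n`: `(n,n,n-2,n-2,…,2,2)` for even `n` and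
`(n,n,n-2,n-2,…,3,3,2)` for odd `n`, as a function sending a row index to its part. -/
def rhoTilde (n i : ℕ) : ℕ :=
  if 1 ≤ i ∧ i ≤ n then (if n % 2 = 1 ∧ i = n then 2 else n - 2 * ((i - 1) / 2)) else 0

private lemma rho_le (k : ℕ) (hk : 1 ≤ k) (i : ℕ) : rhoTilde (2 * k) i ≤ 2 * k := by
  unfold rhoTilde; split_ifs <;> omega

private lemma rho_zero (k : ℕ) (i : ℕ) (h : 2 * k < i) : rhoTilde (2 * k) i = 0 := by
  unfold rhoTilde; split_ifs <;> omega

private lemma box_iff (k i j : ℕ) : inDiagram (rhoTilde (2 * k)) (i, j) ↔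
    1 ≤ i ∧ i ≤ 2 * k ∧ 1 ≤ j ∧ j ≤ 2 * k - 2 * ((i - 1) / 2) := by
  unfold inDiagram rhoTilde
  constructor <;> intro h <;> [skip; skip] <;>
    (simp only at h ⊢; split_ifs at h ⊢ <;> omega)

private lemma row1 (k : ℕ) (hk : 1 ≤ k)
    (hfin : ∀ a b : ℕ × ℕ, {P : List (ℕ × ℕ) | IsLatticePath (rhoTilde (2 * k)) a b P}.Finite) :
    ∀ d j, j + d = 2 * k → 1 ≤ j →
    wtSum (rhoTilde (2 * k)) (1, j) (1, 2 * k) = 1 := by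
  intro d
  induction d with
  | zero =>
    intro j hj hj1
    have : j = 2 * k := by omega
    subst this
    exact wtSum_self _ _ ((box_iff k 1 (2 * k)).mpr (by omega))
  | succ d ih =>
    intro j hj hj1
    have hbox : inDiagram (rhoTilde (2 * k)) (1, j) := (box_iff k 1 j).mpr (by omega)
    have hne : ((1 : ℕ), j) ≠ (1, 2 * k) := by
      simp only [ne_eq, Prod.mk.injEq, true_and]; omega
    have h := wtSum_step _ hfin (1, j) (1, 2 * k) hbox hne
    simp only at h
    rw [h, wtSum_not_in _ (0, j) _ (fun hc => by exact absurd hc.1 (by omega)),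
      ih (j + 1) (by omega) (by omega)]
    norm_num

private lemma main_ind (k : ℕ) (hk : 1 ≤ k)
    (hfin : ∀ a b : ℕ × ℕ, {P : List (ℕ × ℕ) | IsLatticePath (rhoTilde (2 * k)) a b P}.Finite) :
    ∀ n i j, i + (2 * k - j) ≤ n → i % 2 = 0 → j % 2 = 1 →
    inDiagram (rhoTilde (2 * k)) (i, j) →
    wtSum (rhoTilde (2 * k)) (i, j) (1, 2 * k) = 0 := by
  intro n
  induction n with
  | zero =>
    intro i j hm hi hj hbox
    rw [box_iff] at hbox
    omega
  | succ n ih =>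
    intro i j hm hi hj hbox
    rw [box_iff] at hbox
    obtain ⟨hi1, hi2k, hj1, hjL⟩ := hbox
    have hi2 : 2 ≤ i := by omega
    have hjlt : j < 2 * k - 2 * ((i - 1) / 2) := by omega
    -- step 1 : decompose at (i, j)
    have h1 := wtSum_step _ hfin (i, j) (1, 2 * k)
      ((box_iff k i j).mpr (by omega))
      (by simp only [ne_eq, Prod.mk.injEq]; omega)
    simp only at h1
    have hsign : (-1 : ℤ) ^ (i - 1) = -1 := Odd.neg_one_pow (Nat.odd_iff.mpr (by omega))
    -- step 2 : wtSum (i, j+1) = wtSum (i-1, j+1)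
    have h2 : wtSum (rhoTilde (2 * k)) (i, j + 1) (1, 2 * k)
        = wtSum (rhoTilde (2 * k)) (i - 1, j + 1) (1, 2 * k) := by
      have h := wtSum_step _ hfin (i, j + 1) (1, 2 * k)
        ((box_iff k i (j + 1)).mpr (by omega))
        (by simp only [ne_eq, Prod.mk.injEq]; omega)
      simp only at h
      have hz : wtSum (rhoTilde (2 * k)) (i, j + 1 + 1) (1, 2 * k) = 0 := by
        by_cases hcase : j + 2 ≤ 2 * k - 2 * ((i - 1) / 2)
        · exact ih i (j + 2) (by omega) hi (by omega) ((box_iff k i (j + 2)).mpr (by omega))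
        · exact wtSum_not_in _ _ _ (fun hc => hcase (by
            have := (box_iff k i (j + 2)).mp (by exact_mod_cast hc)
            omega))
      rw [h, hz, mul_zero, add_zero]
    -- step 3 : wtSum (i-1, j) = wtSum (i-1, j+1)
    have h3 : wtSum (rhoTilde (2 * k)) (i - 1, j) (1, 2 * k)
        = wtSum (rhoTilde (2 * k)) (i - 1, j + 1) (1, 2 * k) := by
      rcases eq_or_lt_of_le hi2 with hieq | hilt
      · -- i = 2 : row 1
        have hL : 2 * k - 2 * ((i - 1) / 2) = 2 * k := by omega
        rw [← hieq]
        show wtSum (rhoTilde (2 * k)) (1, j) (1, 2 * k)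
          = wtSum (rhoTilde (2 * k)) (1, j + 1) (1, 2 * k)
        rw [row1 k hk hfin (2 * k - j) j (by omega) hj1,
          row1 k hk hfin (2 * k - (j + 1)) (j + 1) (by omega) (by omega)]
      · -- i ≥ 4
        have hi4 : 4 ≤ i := by omega
        have h4 := wtSum_step _ hfin (i - 1, j) (1, 2 * k)
          ((box_iff k (i - 1) j).mpr (by omega))
          (by simp only [ne_eq, Prod.mk.injEq]; omega)
        simp only at h4
        have hz2 : wtSum (rhoTilde (2 * k)) (i - 1 - 1, j) (1, 2 * k) = 0 := by
          have : i - 1 - 1 = i - 2 := by omega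
          rw [this]
          exact ih (i - 2) j (by omega) (by omega) hj
            ((box_iff k (i - 2) j).mpr (by omega))
        have hsign2 : (-1 : ℤ) ^ (i - 1 - 1) = 1 := Even.neg_one_pow (Nat.even_iff.mpr (by omega))
        rw [h4, hz2, hsign2, zero_add, one_mul]
    rw [h1, h2, h3, hsign]
    ring


/-- For `k ≥ 1` and every box `(i,j)` of the double staircase partition
`ρ̃_{2k}` with `i` even and `j` odd, `wt((i,j),(1,2k)) = 0`. -/
theorem stmt10 (k : ℕ) (hk : 1 ≤ k) (i j : ℕ)
    (hbox : inDiagram (rhoTilde (2 * k)) (i, j)) (hi : i % 2 = 0) (hj : j % 2 = 1) :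
    wtSum (rhoTilde (2 * k)) (i, j) (1, 2 * k) = 0 := by
  have hfin : ∀ a b : ℕ × ℕ,
      {P : List (ℕ × ℕ) | IsLatticePath (rhoTilde (2 * k)) a b P}.Finite :=
    fun a b => paths_finite _ (2 * k) (rho_le k hk) (rho_zero k) a b
  exact main_ind k hk hfin (i + (2 * k - j)) i j le_rfl hi hj hbox
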